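/- Let Λ : (k, +) → ℂˣ be an additive character that is nontrivial on O and trivial on 𝔭. Let L₁, L₂ be lattices in V and let γ₁, γ₂ ∈ V be such that Λ(B(γ₁, x)) = Λ(B(γ₂, x)) for all x ∈ L₁ ∩ L₂. Then the cosets γ₁ + L₁* and γ₂ + L₂* have nonempty intersection: (γ₁ + L₁*) ∩ (γ₂ + L₂*) ≠ ∅. -/

import Mathlib

/-!
`O` is the ring of integers of a nonarchimedean local field `k` of characteristic zero
(a complete discrete valuation ring with finite residue field), `𝔭` its maximal ideal,
`V` a finite-dimensional `k`-vector space and `B` a nondegenerate symmetric bilinear form.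
A lattice is a finitely generated `O`-submodule of `V` spanning `V` over `k`, and the dual
of a lattice `L` is `L* = {y ∈ V | B(y, x) ∈ 𝔭 for all x ∈ L}`.
-/

section LatticeDuality

variable (O : Type*) [CommRing O] [IsDomain O] [IsDiscreteValuationRing O]
variable (k : Type*) [Field k] [Algebra O k] [IsFractionRing O k]

/-- The image in `k` of the maximal ideal `𝔭` of the ring of integers `O`. -/
def maxIdealImage : Submodule O k :=
  Submodule.map (Algebra.linearMap O k) (IsLocalRing.maximalIdeal O)

variable (V : Type*) [AddCommGroup V] [Module k V] [Module O V] [IsScalarTower O k V]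

/-- A lattice in `V`: a finitely generated `O`-submodule of `V` that spans `V` over `k`. -/
def IsLatticeIn (L : Submodule O V) : Prop :=
  L.FG ∧ Submodule.span k (L : Set V) = ⊤

/-- The dual lattice `L* = {y ∈ V | B(y, x) ∈ 𝔭 for all x ∈ L}`. -/
def dualLattice (B : V →ₗ[k] V →ₗ[k] k) (L : Submodule O V) : Submodule O V where
  carrier := {y : V | ∀ x ∈ L, B y x ∈ maxIdealImage O k}
  zero_mem' := by
    intro x hx
    simp only [map_zero, LinearMap.zero_apply]
    exact Submodule.zero_mem _
  add_mem' := by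
    intro a b ha hb x hx
    show B (a + b) x ∈ maxIdealImage O k
    rw [map_add, LinearMap.add_apply]
    exact Submodule.add_mem _ (ha x hx) (hb x hx)
  smul_mem' := by
    intro c y hy x hx
    show B (c • y) x ∈ maxIdealImage O k
    rw [← algebraMap_smul k c y, map_smul, LinearMap.smul_apply, algebraMap_smul]
    exact Submodule.smul_mem _ c (hy x hx)


namespace DualBlobAux

variable {O k V}
variable [CommRing O] [IsDomain O] [IsDiscreteValuationRing O]
variable [Field k] [Algebra O k] [IsFractionRing O k]
variable [AddCommGroup V] [Module k V] [Module O V] [IsScalarTower O k V]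

/-- If `Λ` is additive, nontrivial on `O`, trivial on `𝔭`, and `Λ (a • t) = 1` for all
`a ∈ O`, then `t` lies in the (image of the) maximal ideal. -/
theorem mem_of_forall_smul (Λ : k → ℂˣ)
    (hΛadd : ∀ a b : k, Λ (a + b) = Λ a * Λ b)
    (hΛO : ∃ a : O, Λ (algebraMap O k a) ≠ 1)
    {t : k} (h : ∀ a : O, Λ (algebraMap O k a * t) = 1) :
    t ∈ maxIdealImage O k := by
  by_contra hnt
  have ht0 : t ≠ 0 := by
    rintro rfl; exact hnt (Submodule.zero_mem _)
  have hinv : ∃ s : O, algebraMap O k s * t = 1 := by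
    rcases ValuationRing.isInteger_or_isInteger O t with ⟨r, hr⟩ | ⟨s, hs⟩
    · -- t = algebraMap r with r a unit
      have hrunit : IsUnit r := by
        by_contra hru
        exact hnt ⟨r, (IsLocalRing.mem_maximalIdeal r).mpr hru, hr⟩
      obtain ⟨u, rfl⟩ := hrunit
      refine ⟨(u⁻¹ : Oˣ), ?_⟩
      rw [← hr, ← map_mul]
      simp
    · refine ⟨s, ?_⟩
      rw [hs, inv_mul_cancel₀ ht0]
  obtain ⟨s, hs⟩ := hinv
  obtain ⟨b, hb⟩ := hΛO
  apply hb
  have : algebraMap O k (b * s) * t = algebraMap O k b := by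
    rw [map_mul, mul_assoc, hs, mul_one]
  rw [← this]
  exact h (b * s)

theorem exists_smul_mem (L : Submodule O V)
    (hs : Submodule.span k (L : Set V) = ⊤) (v : V) :
    ∃ d : O, d ≠ 0 ∧ d • v ∈ L := by
  have hv : v ∈ Submodule.span k (L : Set V) := by rw [hs]; trivial
  induction hv using Submodule.span_induction with
  | mem x hx => exact ⟨1, one_ne_zero, by simpa using hx⟩
  | zero => exact ⟨1, one_ne_zero, by simpa using L.zero_mem⟩
  | add x y hx hy ihx ihy =>
      obtain ⟨d₁, hd₁, hd₁m⟩ := ihx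
      obtain ⟨d₂, hd₂, hd₂m⟩ := ihy
      refine ⟨d₁ * d₂, mul_ne_zero hd₁ hd₂, ?_⟩
      rw [smul_add]
      exact L.add_mem
        (by rw [mul_comm, mul_smul]; exact L.smul_mem _ hd₁m)
        (by rw [mul_smul]; exact L.smul_mem _ hd₂m)
  | smul a x hx ih =>
      obtain ⟨d, hd, hdm⟩ := ih
      obtain ⟨p, q, hq, hpq⟩ := IsFractionRing.div_surjective (A := O) a
      have hq0 : (q : O) ≠ 0 := nonZeroDivisors.ne_zero hq
      have hqk : algebraMap O k q ≠ 0 :=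
        IsFractionRing.to_map_ne_zero_of_mem_nonZeroDivisors hq
      refine ⟨q * d, mul_ne_zero hq0 hd, ?_⟩
      have key : (q * d) • (a • x) = p • (d • x) := by
        rw [← algebraMap_smul k (q * d) (a • x), smul_smul,
          ← algebraMap_smul k p (d • x), ← algebraMap_smul k d x, smul_smul]
        congr 1
        rw [← hpq]
        field_simp
        rw [map_mul]
        ring
      rw [key]
      exact L.smul_mem p hdm

theorem exists_smul_le (L₁ L₂ : Submodule O V)
    (hs : Submodule.span k (L₁ : Set V) = ⊤) (hfg : L₂.FG) :
    ∃ d : O, d ≠ 0 ∧ ∀ x ∈ L₂, d • x ∈ L₁ := by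
  classical
  obtain ⟨s, hsL⟩ := hfg
  have hch : ∀ v : V, ∃ d : O, d ≠ 0 ∧ d • v ∈ L₁ := exists_smul_mem L₁ hs
  choose D hD0 hDm using hch
  refine ⟨∏ x ∈ s, D x, Finset.prod_ne_zero_iff.mpr fun x _ => hD0 x, ?_⟩
  have hle : L₂ ≤ Submodule.comap (LinearMap.lsmul O V (∏ x ∈ s, D x)) L₁ := by
    rw [← hsL, Submodule.span_le]
    intro x hx
    simp only [SetLike.mem_coe, Submodule.mem_comap, LinearMap.lsmul_apply]
    rw [← Finset.prod_erase_mul s D hx, mul_smul]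
    exact L₁.smul_mem _ (hDm x)
  intro x hx
  exact hle hx

end DualBlobAux

open Pointwise in
/-- Let `Λ : (k, +) → ℂˣ` be an additive character which is nontrivial on `O`
and trivial on `𝔭`.  If `γ₁, γ₂ ∈ V` induce the same character `x ↦ Λ(B(γᵢ, x))` on `L₁ ∩ L₂`,
then the dual blobs `γ₁ + L₁*` and `γ₂ + L₂*` intersect. -/
theorem dualBlob_inter_nonempty
    [CharZero k] [Finite (IsLocalRing.ResidueField O)]
    [IsAdicComplete (IsLocalRing.maximalIdeal O) O]
    [FiniteDimensional k V]
    (B : V →ₗ[k] V →ₗ[k] k)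
    (hsymm : ∀ x y : V, B x y = B y x)
    (hnondeg : ∀ y : V, (∀ x : V, B y x = 0) → y = 0)
    (Λ : k → ℂˣ)
    (hΛadd : ∀ a b : k, Λ (a + b) = Λ a * Λ b)
    (hΛO : ∃ a : O, Λ (algebraMap O k a) ≠ 1)
    (hΛ𝔭 : ∀ x ∈ maxIdealImage O k, Λ x = 1)
    (L₁ L₂ : Submodule O V)
    (h₁ : IsLatticeIn O k V L₁) (h₂ : IsLatticeIn O k V L₂)
    (γ₁ γ₂ : V)
    (hagree : ∀ x ∈ L₁ ⊓ L₂, Λ (B γ₁ x) = Λ (B γ₂ x)) :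
    ((γ₁ +ᵥ (dualLattice O k V B L₁ : Set V)) ∩
        (γ₂ +ᵥ (dualLattice O k V B L₂ : Set V))).Nonempty := by
  classical
  set δ : V := γ₁ - γ₂ with hδdef
  -- Λ is trivial on B δ x for x in the intersection
  have hΛ0 : Λ 0 = 1 := by
    have := hΛadd 0 0
    rw [add_zero] at this
    exact (left_eq_mul.mp this)
  have hδΛ : ∀ x ∈ L₁ ⊓ L₂, Λ (B δ x) = 1 := by
    intro x hx
    have hsub : B δ x = B γ₁ x - B γ₂ x := by
      simp [hδdef, map_sub]
    have h1 : Λ (B γ₁ x) = Λ (B δ x) * Λ (B γ₂ x) := by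
      rw [← hΛadd, hsub, sub_add_cancel]
    rw [hagree x hx] at h1
    exact right_eq_mul.mp h1
  -- key: B δ x₀ ∈ 𝔭 image for x₀ ∈ L₁ ⊓ L₂
  have hkey : ∀ x₀ ∈ L₁ ⊓ L₂, B δ x₀ ∈ maxIdealImage O k := by
    intro x₀ hx₀
    apply DualBlobAux.mem_of_forall_smul Λ hΛadd hΛO
    intro a
    have hax : a • x₀ ∈ L₁ ⊓ L₂ := Submodule.smul_mem _ a hx₀
    have heq : B δ (a • x₀) = algebraMap O k a * B δ x₀ := by
      rw [← algebraMap_smul k a x₀, map_smul, smul_eq_mul]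
    rw [← heq]
    exact hδΛ _ hax
  -- commensurability
  obtain ⟨d, hd0, hd⟩ := DualBlobAux.exists_smul_le L₁ L₂ h₁.2 h₂.1
  have hdk : algebraMap O k d ≠ 0 := by
    simpa using (map_ne_zero_iff _ (IsFractionRing.injective O k)).mpr hd0
  set P : Submodule O V := Submodule.map (LinearMap.lsmul O V d) L₂ with hPdef
  have hPle : P ≤ L₁ := by
    rintro _ ⟨x, hx, rfl⟩
    exact hd x hx
  set N : Submodule O ↥L₁ := P.comap L₁.subtype with hNdef
  have hPN : Submodule.map L₁.subtype N = P := by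
    rw [hNdef, Submodule.map_comap_subtype]
    exact inf_eq_right.mpr hPle
  -- free module structure on L₁
  haveI : Module.Finite O ↥L₁ := Module.Finite.iff_fg.mpr h₁.1
  haveI : NoZeroSMulDivisors O V := by
    refine ⟨fun {a} {x} h => ?_⟩
    by_cases ha : a = 0
    · exact Or.inl ha
    · refine Or.inr ?_
      rw [← algebraMap_smul k a x] at h
      have hak : algebraMap O k a ≠ 0 :=
        (map_ne_zero_iff _ (IsFractionRing.injective O k)).mpr ha
      exact (smul_eq_zero.mp h).resolve_left hak
  haveI : Module.Free O ↥L₁ := Module.free_of_finite_type_torsion_free'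
  set ι := Module.Free.ChooseBasisIndex O ↥L₁ with hιdef
  set b : Module.Basis ι O ↥L₁ := Module.Free.chooseBasis O ↥L₁ with hbdef
  obtain ⟨n, snf⟩ := N.smithNormalForm b
  obtain ⟨bM, bN, f, a, hsnf⟩ := snf
  set e : ι → V := fun i => ((bM i : ↥L₁) : V) with hedef
  have he_mem : ∀ i, e i ∈ L₁ := fun i => (bM i).2
  -- L₁ as a span
  have hL₁span : L₁ = Submodule.span O (Set.range e) := by
    calc L₁ = Submodule.map L₁.subtype ⊤ := (Submodule.map_subtype_top L₁).symm
      _ = Submodule.map L₁.subtype (Submodule.span O (Set.range bM)) := by rw [bM.span_eq]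
      _ = Submodule.span O (L₁.subtype '' Set.range bM) := Submodule.map_span _ _
      _ = Submodule.span O (Set.range e) := by rw [← Set.range_comp]; rfl
  -- e is a k-basis of V
  have hlinO : LinearIndependent O e :=
    bM.linearIndependent.map' L₁.subtype (Submodule.ker_subtype L₁)
  have hlink : LinearIndependent k e := (LinearIndependent.iff_fractionRing O k).mp hlinO
  have hspan : ⊤ ≤ Submodule.span k (Set.range e) := by
    rw [← h₁.2, Submodule.span_le]
    intro x hx
    have hx' : x ∈ Submodule.span O (Set.range e) := by rwa [← hL₁span]
    exact Submodule.span_le_restrictScalars O k (Set.range e) hx'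
  set bV : Module.Basis ι k V := Module.Basis.mk hlink hspan with hbVdef
  have hbV : ∀ i, bV i = e i := fun i => Module.Basis.mk_apply hlink hspan i
  -- B as an equivalence onto the dual
  have hker : ∀ m : V, B m = 0 → m = 0 := fun m hm =>
    hnondeg m fun x => by rw [hm]; rfl
  have hBinj : Function.Injective B :=
    LinearMap.ker_eq_bot.mp (LinearMap.ker_eq_bot'.mpr hker)
  have hBsurj : Function.Surjective B :=
    (LinearMap.injective_iff_surjective_of_finrank_eq_finrank
      (by rw [Subspace.dual_finrank_eq])).mp hBinj
  set Φ : V ≃ₗ[k] Module.Dual k V := LinearEquiv.ofBijective B ⟨hBinj, hBsurj⟩ with hΦdef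
  set bF : Module.Basis ι k V := bV.dualBasis.map Φ.symm with hbFdef
  have hbF : ∀ j, B (bF j) = bV.coord j := by
    intro j
    have h1 : bF j = Φ.symm (bV.dualBasis j) := by rw [hbFdef, Module.Basis.map_apply]
    have h2 : Φ (bF j) = bV.dualBasis j := by rw [h1, Φ.apply_symm_apply]
    have h3 : Φ (bF j) = B (bF j) := LinearEquiv.ofBijective_apply _ _
    rw [← h3, h2, ← Module.Basis.coe_dualBasis]
  -- coordinates of δ
  set t : ι →₀ k := bF.repr δ with htdef
  have hδsum : δ = ∑ j, t j • bF j := (bF.sum_repr δ).symm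
  have hco : ∀ j i, B (bF j) (e i) = if i = j then 1 else 0 := by
    intro j i
    rw [hbF j, ← hbV i, Module.Basis.coord_apply, bV.repr_self, Finsupp.single_apply]
  have hBt : ∀ i, B δ (e i) = t i := by
    intro i
    conv_lhs => rw [hδsum]
    rw [map_sum, LinearMap.sum_apply]
    simp only [map_smul, LinearMap.smul_apply, hco, smul_eq_mul, mul_ite, mul_one, mul_zero]
    simp
  -- split δ into two pieces
  set δ₁ : V := ∑ j ∈ Finset.univ.filter (fun j => t j ∈ maxIdealImage O k), t j • bF j
    with hδ₁def
  set δ₂ : V := δ - δ₁ with hδ₂def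
  have hBδ₁ : ∀ i, B δ₁ (e i) = if t i ∈ maxIdealImage O k then t i else 0 := by
    intro i
    rw [hδ₁def, map_sum, LinearMap.sum_apply]
    simp only [map_smul, LinearMap.smul_apply, hco, smul_eq_mul, mul_ite, mul_one, mul_zero]
    rw [Finset.sum_ite_eq _ i]
    simp [Finset.mem_filter]
  have hBδ₂ : ∀ i, B δ₂ (e i) = if t i ∈ maxIdealImage O k then 0 else t i := by
    intro i
    rw [hδ₂def, map_sub, LinearMap.sub_apply, hBt, hBδ₁]
    split <;> simp
  -- generators of L₂
  set u : Fin n → k := fun m => (algebraMap O k d)⁻¹ * algebraMap O k (a m) with hudef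
  set g : Fin n → V := fun m => u m • e (f m) with hgdef
  set w : Fin n → V := fun m => ((bN m : ↥L₁) : V) with hwdef
  have hw : ∀ m, w m = algebraMap O k (a m) • e (f m) := by
    intro m
    rw [hwdef]
    simp only [hsnf m, Submodule.coe_smul]
    rw [algebraMap_smul]
  have hwP : ∀ m, w m ∈ P := by
    intro m
    rw [← hPN]
    exact ⟨(bN m : ↥L₁), (bN m).2, rfl⟩
  have hgw : ∀ m, g m = (algebraMap O k d)⁻¹ • w m := by
    intro m
    rw [hgdef, hw, hudef, smul_smul]
  have hgL₂ : ∀ m, g m ∈ L₂ := by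
    intro m
    obtain ⟨y, hy, hdy⟩ := hwP m
    have : g m = y := by
      rw [hgw, ← hdy]
      show (algebraMap O k d)⁻¹ • (LinearMap.lsmul O V d) y = y
      rw [LinearMap.lsmul_apply, ← algebraMap_smul k d y, smul_smul,
        inv_mul_cancel₀ hdk, one_smul]
    rw [this]
    exact hy
  -- L₂ is contained in the O-span of the g's
  have hP : P = Submodule.span O (Set.range w) := by
    calc P = Submodule.map L₁.subtype N := hPN.symm
      _ = Submodule.map L₁.subtype (Submodule.map N.subtype ⊤) := by
          rw [Submodule.map_subtype_top]
      _ = Submodule.map L₁.subtype (Submodule.map N.subtype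
            (Submodule.span O (Set.range bN))) := by rw [bN.span_eq]
      _ = Submodule.span O (L₁.subtype '' (N.subtype '' Set.range bN)) := by
          rw [Submodule.map_span, Submodule.map_span]
      _ = Submodule.span O (Set.range w) := by
          rw [← Set.range_comp, ← Set.range_comp]; rfl
  set m : V →ₗ[O] V :=
    (((algebraMap O k d)⁻¹ • LinearMap.id : V →ₗ[k] V)).restrictScalars O with hmdef
  have hm : ∀ v : V, m v = (algebraMap O k d)⁻¹ • v := fun v => rfl
  have hL₂le : L₂ ≤ Submodule.span O (Set.range g) := by
    intro x hx
    have hdx : d • x ∈ P := ⟨x, hx, rfl⟩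
    have hmx : m (d • x) = x := by
      rw [hm, ← algebraMap_smul k d x, smul_smul, inv_mul_cancel₀ hdk, one_smul]
    have : m (d • x) ∈ Submodule.map m P := Submodule.mem_map_of_mem hdx
    rw [hP, Submodule.map_span, ← Set.range_comp] at this
    rw [← hmx]
    refine Submodule.span_mono ?_ this
    rintro _ ⟨i, rfl⟩
    exact ⟨i, by rw [Function.comp_apply, hm, ← hgw]⟩
  -- the dichotomy
  have hdichot : ∀ i : Fin n,
      t (f i) ∈ maxIdealImage O k ∨ u i * t (f i) ∈ maxIdealImage O k := by
    intro i
    have ha0 : a i ≠ 0 := by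
      intro h
      have : w i = 0 := by rw [hw, h, map_zero, zero_smul]
      have hbN0 : ((bN i : ↥L₁) : V) = 0 := this
      have : (bN i : ↥L₁) = 0 := by exact_mod_cast hbN0
      have : (bN i : ↥N) = 0 := by exact_mod_cast this
      exact bN.ne_zero i this
    have hu0 : u i ≠ 0 := by
      rw [hudef]
      exact mul_ne_zero (inv_ne_zero hdk)
        ((map_ne_zero_iff _ (IsFractionRing.injective O k)).mpr ha0)
    rcases ValuationRing.isInteger_or_isInteger O (u i) with ⟨r, hr⟩ | ⟨s, hs⟩
    · -- u i integral: g i ∈ L₁ ∩ L₂, test with it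
      right
      have hgL₁ : g i ∈ L₁ := by
        rw [hgdef]
        show u i • e (f i) ∈ L₁
        rw [← hr, algebraMap_smul]
        exact L₁.smul_mem r (he_mem (f i))
      have hmem : g i ∈ L₁ ⊓ L₂ := Submodule.mem_inf.mpr ⟨hgL₁, hgL₂ i⟩
      have := hkey _ hmem
      rwa [show (B δ) (g i) = u i * t (f i) by
        rw [hgdef]; show (B δ) (u i • e (f i)) = _
        rw [map_smul, smul_eq_mul, hBt]] at this
    · -- (u i)⁻¹ integral: e (f i) ∈ L₁ ∩ L₂
      left
      have heL₂ : e (f i) ∈ L₂ := by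
        have : e (f i) = s • g i := by
          rw [hgdef]
          show e (f i) = s • (u i • e (f i))
          rw [← algebraMap_smul k s, smul_smul, hs, inv_mul_cancel₀ hu0, one_smul]
        rw [this]
        exact L₂.smul_mem s (hgL₂ i)
      have hmem : e (f i) ∈ L₁ ⊓ L₂ := Submodule.mem_inf.mpr ⟨he_mem (f i), heL₂⟩
      have := hkey _ hmem
      rwa [hBt] at this
  -- δ₁ lies in the dual of L₁
  have hδ₁mem : δ₁ ∈ dualLattice O k V B L₁ := by
    show ∀ x ∈ L₁, B δ₁ x ∈ maxIdealImage O k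
    intro x hx
    have hle : L₁ ≤ Submodule.comap ((B δ₁).restrictScalars O) (maxIdealImage O k) := by
      rw [hL₁span, Submodule.span_le]
      rintro _ ⟨i, rfl⟩
      show B δ₁ (e i) ∈ maxIdealImage O k
      rw [hBδ₁]
      split
      · assumption
      · exact Submodule.zero_mem _
    exact hle hx
  -- δ₂ lies in the dual of L₂
  have hδ₂mem : δ₂ ∈ dualLattice O k V B L₂ := by
    show ∀ x ∈ L₂, B δ₂ x ∈ maxIdealImage O k
    intro x hx
    have hle : Submodule.span O (Set.range g) ≤
        Submodule.comap ((B δ₂).restrictScalars O) (maxIdealImage O k) := by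
      rw [Submodule.span_le]
      rintro _ ⟨i, rfl⟩
      show B δ₂ (g i) ∈ maxIdealImage O k
      have : B δ₂ (g i) = u i * B δ₂ (e (f i)) := by
        rw [hgdef]; show (B δ₂) (u i • e (f i)) = _
        rw [map_smul, smul_eq_mul]
      rw [this, hBδ₂]
      by_cases hc : t (f i) ∈ maxIdealImage O k
      · rw [if_pos hc, mul_zero]
        exact Submodule.zero_mem _
      · rw [if_neg hc]
        exact (hdichot i).resolve_left hc
    exact hle (hL₂le hx)
  -- the witness
  refine ⟨γ₂ + δ₂, ?_, ?_⟩
  · refine Set.mem_vadd_set.mpr ⟨-δ₁, Submodule.neg_mem _ hδ₁mem, ?_⟩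
    show γ₁ + -δ₁ = γ₂ + δ₂
    rw [hδ₂def, hδdef]
    abel
  · exact Set.mem_vadd_set.mpr ⟨δ₂, hδ₂mem, rfl⟩

end LatticeDuality
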